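/- Let λ ∈ P⁰₊ and η ∈ B(λ)_cl with e_j η ≠ 0 and (ι(η))(h_j) ≤ 0. Then Deg_λ(e_j^max η) = Deg_λ(η) − ε_0(η) − (ι(η))(h_0) if j = 0, and Deg_λ(e_j^max η) = Deg_λ(η) if j ≠ 0. -/

import Mathlib

def iterOpt {β : Type*} (g : β → Option β) : ℕ → β → Option β
  | 0, b => some b
  | n + 1, b => (iterOpt g n b).bind g

/-- Behavior of the degree function under `e_j^max`: if `e_j η ≠ 0` and
`(ι(η))(h_j) ≤ 0`, then `Deg_λ(e_0^max η) = Deg_λ(η) - ε_0(η) - (ι(η))(h_0)`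
and `Deg_λ(e_j^max η) = Deg_λ(η)` for `j ≠ 0`. -/
theorem stmt_15
    {Hc : Type*} [AddCommGroup Hc] [Module ℝ Hc]
    {I : Type*} (i0 : I)      -- the affine node `0`
    (Bcl : Set (ℝ → Hc))
    (E : I → (ℝ → Hc) → Option (ℝ → Hc))
    (hEcl : ∀ j, ∀ η ∈ Bcl, ∀ η', E j η = some η' → η' ∈ Bcl)
    (ε : I → (ℝ → Hc) → ℕ)
    (hεiter : ∀ j, ∀ η ∈ Bcl, ∀ l : ℕ, iterOpt (E j) l η ≠ none ↔ l ≤ ε j η)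
    (ιf : (ℝ → Hc) → Hc)
    (pairc : Hc → I → ℤ) (rc : I → Hc → Hc)
    (Deg : (ℝ → Hc) → ℤ)
    -- one-step degree formulas
    (hdich : ∀ η ∈ Bcl, ∀ η', E i0 η = some η' →
        ιf η' = ιf η ∨ ιf η' = rc i0 (ιf η))
    (hdeg0a : ∀ η ∈ Bcl, ∀ η', E i0 η = some η' → ιf η' = ιf η →
        Deg η' = Deg η - 1)
    (hdeg0b : ∀ η ∈ Bcl, ∀ η', E i0 η = some η' → ιf η' = rc i0 (ιf η) →
        Deg η' = Deg η - pairc (ιf η) i0 - 1)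
    (hdegj : ∀ j, j ≠ i0 → ∀ η ∈ Bcl, ∀ η', E j η = some η' → Deg η' = Deg η)
    -- initial-direction facts
    (hinit2 : ∀ j, ∀ η ∈ Bcl, ∀ l : ℕ, l < ε j η →
        ∀ ψ, iterOpt (E j) l η = some ψ → ιf ψ = ιf η)
    (hinit3 : ∀ j, ∀ η ∈ Bcl, pairc (ιf η) j ≤ 0 →
        ∀ ψ, iterOpt (E j) (ε j η) η = some ψ → ιf ψ = rc j (ιf η))
    (hinit1 : ∀ j, ∀ η ∈ Bcl, E j η = none → 0 ≤ pairc (ιf η) j)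
    (η : ℝ → Hc) (hη : η ∈ Bcl) (j : I)
    (hEne : E j η ≠ none) (hιneg : pairc (ιf η) j ≤ 0) :
    ∀ ψ, iterOpt (E j) (ε j η) η = some ψ →
      (j = i0 → Deg ψ = Deg η - (ε i0 η : ℤ) - pairc (ιf η) i0) ∧
      (j ≠ i0 → Deg ψ = Deg η) := by
  have h1 : iterOpt (E j) 1 η = E j η := by simp [iterOpt]
  have hε1 : 1 ≤ ε j η := (hεiter j η hη 1).1 (by rw [h1]; exact hEne)
  obtain ⟨m, hm⟩ : ∃ m, ε j η = m + 1 := ⟨ε j η - 1, (Nat.succ_pred_eq_of_pos hε1).symm⟩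
  by_cases hji : j = i0
  · subst hji
    have key : ∀ l, l < ε j η → ∀ ψ, iterOpt (E j) l η = some ψ →
        ψ ∈ Bcl ∧ Deg ψ = Deg η - l := by
      intro l
      induction l with
      | zero =>
        intro _ ψ hψ
        simp only [iterOpt] at hψ
        obtain rfl : η = ψ := by injection hψ
        exact ⟨hη, by simp⟩
      | succ l ih =>
        intro hlt ψ hψ
        simp only [iterOpt] at hψ
        obtain ⟨φ, hφ, hstep⟩ := Option.bind_eq_some_iff.1 hψ
        have hl : l < ε j η := Nat.lt_of_succ_lt hlt
        obtain ⟨hφcl, hφdeg⟩ := ih hl φ hφ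
        refine ⟨hEcl j φ hφcl ψ hstep, ?_⟩
        have hιφ : ιf φ = ιf η := hinit2 j η hη l hl φ hφ
        have hιψ : ιf ψ = ιf η := hinit2 j η hη (l + 1) hlt ψ (by simp only [iterOpt, hφ, Option.bind]; exact hstep)
        have := hdeg0a φ hφcl ψ hstep (by rw [hιψ, hιφ])
        rw [this, hφdeg]; push_cast; ring
    intro ψ hψ
    have hψ' := hψ
    rw [hm] at hψ
    simp only [iterOpt] at hψ
    obtain ⟨φ, hφ, hstep⟩ := Option.bind_eq_some_iff.1 hψ
    have hmlt : m < ε j η := by omega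
    obtain ⟨hφcl, hφdeg⟩ := key m hmlt φ hφ
    have hιφ : ιf φ = ιf η := hinit2 j η hη m hmlt φ hφ
    have hιψ : ιf ψ = rc j (ιf η) := hinit3 j η hη hιneg ψ hψ'
    have := hdeg0b φ hφcl ψ hstep (by rw [hιψ, hιφ])
    refine ⟨fun _ => ?_, fun h => absurd rfl h⟩
    rw [this, hφdeg, hιφ, hm]; push_cast; ring
  · have key : ∀ l, l ≤ ε j η → ∀ ψ, iterOpt (E j) l η = some ψ →
        ψ ∈ Bcl ∧ Deg ψ = Deg η := by
      intro l
      induction l with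
      | zero =>
        intro _ ψ hψ
        simp only [iterOpt] at hψ
        obtain rfl : η = ψ := by injection hψ
        exact ⟨hη, rfl⟩
      | succ l ih =>
        intro hlt ψ hψ
        simp only [iterOpt] at hψ
        obtain ⟨φ, hφ, hstep⟩ := Option.bind_eq_some_iff.1 hψ
        obtain ⟨hφcl, hφdeg⟩ := ih (by omega) φ hφ
        exact ⟨hEcl j φ hφcl ψ hstep, by rw [hdegj j hji φ hφcl ψ hstep, hφdeg]⟩
    intro ψ hψ
    exact ⟨fun h => absurd h hji, fun _ => (key (ε j η) le_rfl ψ hψ).2⟩
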